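/- Let F be a field with at least 3 elements, m ≥ n ≥ 2, and A, B ∈ M_{m,n}(F) with A ≠ B. Then rank(A − B) = 1 if and only if there exists R ∈ M_{m,n}(F) with R ≠ A and R ≠ B such that for every X ∈ M_{m,n}(F), if X − R has full rank then X − A has full rank or X − B has full rank. -/

import Mathlib

open Module Submodule

section Aux

variable {F : Type*} [Field F] [DecidableEq F] {m n : ℕ}

theorem rank_eq_iff_inj (M : Matrix (Fin m) (Fin n) F) :
    M.rank = n ↔ Function.Injective M.mulVecLin := by
  rw [Matrix.rank, ← LinearMap.ker_eq_bot]
  have h := LinearMap.finrank_range_add_finrank_ker M.mulVecLin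
  rw [Module.finrank_fin_fun] at h
  constructor
  · intro hr
    rw [hr] at h
    have : finrank F (LinearMap.ker M.mulVecLin) = 0 := by omega
    exact Submodule.finrank_eq_zero.mp this
  · intro hk
    rw [hk, finrank_bot] at h
    omega

theorem range_rank_one (D : Matrix (Fin m) (Fin n) F) (hD : D.rank = 1) :
    ∃ u : Fin m → F, u ≠ 0 ∧ ∀ x : Fin n → F, ∃ c : F, D.mulVec x = c • u := by
  have h1 : finrank F (LinearMap.range D.mulVecLin) = 1 := hD
  have hne : LinearMap.range D.mulVecLin ≠ ⊥ := by
    intro h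
    rw [h, finrank_bot] at h1; omega
  obtain ⟨u, hu, hune⟩ := Submodule.exists_mem_ne_zero_of_ne_bot hne
  refine ⟨u, hune, fun x => ?_⟩
  have hle : (F ∙ u) ≤ LinearMap.range D.mulVecLin := by
    rwa [Submodule.span_singleton_le_iff_mem]
  have heq : (F ∙ u) = LinearMap.range D.mulVecLin := by
    apply Submodule.eq_of_le_of_finrank_le hle
    rw [h1, finrank_span_singleton hune]
  have : D.mulVec x ∈ (F ∙ u) := by
    rw [heq]; exact ⟨x, rfl⟩
  obtain ⟨c, hc⟩ := Submodule.mem_span_singleton.mp this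
  exact ⟨c, hc.symm⟩

theorem key_fwd (D M : Matrix (Fin m) (Fin n) F) (hD : D.rank = 1)
    (hM : Function.Injective M.mulVecLin) (t : F) :
    Function.Injective (M + t • D).mulVecLin ∨
      Function.Injective (M + (t + 1) • D).mulVecLin := by
  obtain ⟨u, hu, hDu⟩ := range_rank_one D hD
  by_contra hcon
  push_neg at hcon
  obtain ⟨h1, h2⟩ := hcon
  rw [← LinearMap.ker_eq_bot] at h1 h2 hM
  obtain ⟨x, hxker, hx0⟩ := Submodule.exists_mem_ne_zero_of_ne_bot h1
  obtain ⟨y, hyker, hy0⟩ := Submodule.exists_mem_ne_zero_of_ne_bot h2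
  have hxk : M.mulVec x + t • D.mulVec x = 0 := by
    have := hxker
    rw [LinearMap.mem_ker, Matrix.mulVecLin_apply, Matrix.add_mulVec,
      Matrix.smul_mulVec] at this
    exact this
  have hyk : M.mulVec y + (t + 1) • D.mulVec y = 0 := by
    have := hyker
    rw [LinearMap.mem_ker, Matrix.mulVecLin_apply, Matrix.add_mulVec,
      Matrix.smul_mulVec] at this
    exact this
  obtain ⟨α, hα⟩ := hDu x
  obtain ⟨β, hβ⟩ := hDu y
  have hMinj : ∀ v : Fin n → F, M.mulVec v = 0 → v = 0 := by
    intro v hv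
    have : v ∈ LinearMap.ker M.mulVecLin := by
      rw [LinearMap.mem_ker, Matrix.mulVecLin_apply]; exact hv
    rwa [hM, Submodule.mem_bot] at this
  have hα0 : α ≠ 0 := by
    intro h
    rw [h, zero_smul] at hα
    rw [hα, smul_zero, add_zero] at hxk
    exact hx0 (hMinj x hxk)
  have hβ0 : β ≠ 0 := by
    intro h
    rw [h, zero_smul] at hβ
    rw [hβ, smul_zero, add_zero] at hyk
    exact hy0 (hMinj y hyk)
  have hMx : M.mulVec x = -(t * α) • u := by
    rw [hα] at hxk
    have : M.mulVec x = -(t • α • u) := by linear_combination (norm := module) hxk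
    rw [this]; module
  have hMy : M.mulVec y = -((t + 1) * β) • u := by
    rw [hβ] at hyk
    have : M.mulVec y = -((t + 1) • β • u) := by linear_combination (norm := module) hyk
    rw [this]; module
  have hcomb : M.mulVec (((t + 1) * β) • x - (t * α) • y) = 0 := by
    rw [Matrix.mulVec_sub, Matrix.mulVec_smul, Matrix.mulVec_smul, hMx, hMy]
    module
  have hveq : ((t + 1) * β) • x = (t * α) • y := by
    have := hMinj _ hcomb
    exact sub_eq_zero.mp this
  have hDeq : ((t + 1) * β) • D.mulVec x = (t * α) • D.mulVec y := by
    rw [← Matrix.mulVec_smul, ← Matrix.mulVec_smul, hveq]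
  rw [hα, hβ] at hDeq
  have hfin : (α * β) • u = 0 := by linear_combination (norm := module) hDeq
  rcases smul_eq_zero.mp hfin with h | h
  · rcases mul_eq_zero.mp h with h | h
    · exact hα0 h
    · exact hβ0 h
  · exact hu h

theorem exists_basis_pair (hn : 2 ≤ n) {x z : Fin n → F}
    (h : LinearIndependent F ![x, z]) :
    ∃ b : Basis (Fin n) F (Fin n → F),
      b ⟨0, by omega⟩ = x ∧ b ⟨1, by omega⟩ = z := by
  have hxz : x ≠ z := by
    intro hh
    have := (LinearIndependent.pair_iff.mp h 1 (-1) (by rw [hh]; module)).1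
    exact one_ne_zero this
  have hs : LinearIndepOn F id (Set.range ![x, z]) :=
    (linearIndepOn_id_range_iff h.injective).mpr h
  set t : Set (Fin n → F) := hs.extend (Set.subset_univ _) with ht
  let b0 : Basis ↥t F (Fin n → F) := Module.Basis.extend hs
  haveI : FiniteDimensional F (Fin n → F) := by infer_instance
  haveI : Fintype ↥t := FiniteDimensional.fintypeBasisIndex b0
  have hcard : Fintype.card ↥t = n := by
    have h1 := Module.finrank_eq_card_basis b0
    rw [Module.finrank_fin_fun] at h1
    omega
  have hxmem : x ∈ t := hs.subset_extend _ ⟨0, rfl⟩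
  have hzmem : z ∈ t := hs.subset_extend _ ⟨1, rfl⟩
  let e0 : ↥t ≃ Fin n := Fintype.equivFinOfCardEq hcard
  have hne : e0 ⟨x, hxmem⟩ ≠ e0 ⟨z, hzmem⟩ := by
    simp only [ne_eq, EmbeddingLike.apply_eq_iff_eq, Subtype.mk.injEq]
    exact hxz
  let σ : Equiv.Perm (Fin n) := Equiv.swap (e0 ⟨x, hxmem⟩) ⟨0, by omega⟩
  have hσz : σ (e0 ⟨z, hzmem⟩) ≠ ⟨0, by omega⟩ := by
    intro hh
    have := σ.injective (hh.trans (Equiv.swap_apply_left _ _).symm)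
    exact hne this.symm
  let τ : Equiv.Perm (Fin n) := Equiv.swap (σ (e0 ⟨z, hzmem⟩)) ⟨1, by omega⟩
  have h01 : (⟨0, by omega⟩ : Fin n) ≠ ⟨1, by omega⟩ := by
    intro hh; exact absurd (Fin.mk.injEq .. ▸ hh) (by simp)
  let e : ↥t ≃ Fin n := (e0.trans σ).trans τ
  have hex : e ⟨x, hxmem⟩ = ⟨0, by omega⟩ := by
    show τ (σ (e0 ⟨x, hxmem⟩)) = _
    have : σ (e0 ⟨x, hxmem⟩) = ⟨0, by omega⟩ := Equiv.swap_apply_left _ _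
    rw [this]
    exact Equiv.swap_apply_of_ne_of_ne hσz.symm h01
  have hez : e ⟨z, hzmem⟩ = ⟨1, by omega⟩ := by
    show τ (σ (e0 ⟨z, hzmem⟩)) = _
    exact Equiv.swap_apply_left _ _
  refine ⟨b0.reindex e, ?_, ?_⟩
  · rw [Module.Basis.reindex_apply, ← hex, Equiv.symm_apply_apply]
    exact Module.Basis.extend_apply_self hs _
  · rw [Module.Basis.reindex_apply, ← hez, Equiv.symm_apply_apply]
    exact Module.Basis.extend_apply_self hs _

theorem exists_inj_matrix (hmn : n ≤ m) (hn : 2 ≤ n) {x z : Fin n → F}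
    (hxz : LinearIndependent F ![x, z]) {u w : Fin m → F}
    (huw : LinearIndependent F ![u, w]) :
    ∃ Y : Matrix (Fin m) (Fin n) F,
      Y.mulVec x = u ∧ Y.mulVec z = w ∧ Function.Injective Y.mulVecLin := by
  have hm : 2 ≤ m := le_trans hn hmn
  obtain ⟨b, hb0, hb1⟩ := exists_basis_pair hn hxz
  obtain ⟨c, hc0, hc1⟩ := exists_basis_pair hm huw
  set v : Fin n → (Fin m → F) := fun i => c (Fin.castLE hmn i) with hv
  have hvli : LinearIndependent F v :=
    c.linearIndependent.comp _ (Fin.castLE_injective hmn)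
  let g : (Fin n → F) →ₗ[F] (Fin m → F) := b.constr F v
  have hgb : ∀ i, g (b i) = v i := fun i => b.constr_basis F v i
  have hginj : Function.Injective g := by
    rw [← LinearMap.ker_eq_bot, eq_bot_iff]
    intro p hp
    rw [LinearMap.mem_ker] at hp
    have hrep : ∑ i, b.repr p i • b i = p := b.sum_repr p
    have : ∑ i, b.repr p i • v i = 0 := by
      rw [← hp]
      conv_rhs => rw [← hrep]
      rw [map_sum]
      simp [hgb]
    have hz := Fintype.linearIndependent_iff.mp hvli (fun i => b.repr p i) this
    have : p = 0 := by
      rw [← hrep]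
      simp [hz]
    simp [this]
  refine ⟨LinearMap.toMatrix' g, ?_, ?_, ?_⟩
  · have : (LinearMap.toMatrix' g).mulVec x = g x := by
      rw [← Matrix.toLin'_apply, Matrix.toLin'_toMatrix']
    rw [this, ← hb0, hgb]
    show c (Fin.castLE hmn ⟨0, by omega⟩) = u
    rw [← hc0]
    congr 1
  · have : (LinearMap.toMatrix' g).mulVec z = g z := by
      rw [← Matrix.toLin'_apply, Matrix.toLin'_toMatrix']
    rw [this, ← hb1, hgb]
    show c (Fin.castLE hmn ⟨1, by omega⟩) = w
    rw [← hc1]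
    congr 1
  · have : (LinearMap.toMatrix' g).mulVecLin = g := by
      rw [← Matrix.toLin'_apply', Matrix.toLin'_toMatrix']
    rw [this]; exact hginj

theorem li_pair_comm {V : Type*} [AddCommGroup V] [Module F V] {x z : V}
    (h : LinearIndependent F ![x, z]) : LinearIndependent F ![z, x] := by
  rw [LinearIndependent.pair_iff] at h ⊢
  intro s t hst
  have := h t s (by rw [← hst]; module)
  exact ⟨this.2, this.1⟩

theorem exists_indep_partner (hn : 2 ≤ n) {x : Fin n → F} (hx : x ≠ 0) :
    ∃ z : Fin n → F, LinearIndependent F ![x, z] := by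
  have hne : (F ∙ x) ≠ ⊤ := by
    intro h
    have h1 : finrank F (F ∙ x) = 1 := finrank_span_singleton hx
    rw [h, finrank_top, Module.finrank_fin_fun] at h1
    omega
  have : ∃ z, z ∉ (F ∙ x) := by
    by_contra hc
    push_neg at hc
    exact hne (Submodule.eq_top_iff'.mpr hc)
  obtain ⟨z, hz⟩ := this
  refine ⟨z, (LinearIndependent.pair_iff' hx).mpr fun a ha => ?_⟩
  exact hz (Submodule.mem_span_singleton.mpr ⟨a, ha⟩)

theorem substep_A (hn : 2 ≤ n) {P Q : Matrix (Fin m) (Fin n) F}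
    (hbad : ∀ x z : Fin n → F, LinearIndependent F ![x, z] →
      ¬ LinearIndependent F ![P.mulVec x, Q.mulVec z])
    {x : Fin n → F} (hPx : P.mulVec x ≠ 0) (z : Fin n → F) :
    Q.mulVec z ∈ F ∙ (P.mulVec x) := by
  have hx : x ≠ 0 := by intro h; apply hPx; rw [h, Matrix.mulVec_zero]
  have key : ∀ y : Fin n → F, LinearIndependent F ![x, y] →
      Q.mulVec y ∈ F ∙ (P.mulVec x) := by
    intro y hy
    have := hbad x y hy
    rw [LinearIndependent.pair_iff' hPx] at this
    push_neg at this
    obtain ⟨a, ha⟩ := this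
    exact Submodule.mem_span_singleton.mpr ⟨a, ha⟩
  by_cases hli : LinearIndependent F ![x, z]
  · exact key z hli
  · rw [LinearIndependent.pair_iff' hx] at hli
    push_neg at hli
    obtain ⟨a, ha⟩ := hli
    obtain ⟨z₀, hz₀⟩ := exists_indep_partner hn hx
    have hz₀' : LinearIndependent F ![x, z + z₀] := by
      rw [LinearIndependent.pair_iff' hx]
      intro b hb
      rw [LinearIndependent.pair_iff' hx] at hz₀
      apply hz₀ (b - a)
      rw [sub_smul, ha, hb]
      abel
    have h1 := key _ hz₀'
    have h2 := key _ hz₀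
    rw [Matrix.mulVec_add] at h1
    have := Submodule.sub_mem _ h1 h2
    simpa using this

theorem mulVec_ne_zero_of_ne_zero {P : Matrix (Fin m) (Fin n) F} (hP : P ≠ 0) :
    ∃ x, P.mulVec x ≠ 0 := by
  by_contra hc
  push_neg at hc
  apply hP
  apply Matrix.toLin'.injective
  rw [map_zero]
  apply LinearMap.ext
  intro v
  rw [Matrix.toLin'_apply]
  simp [hc v]

theorem exists_good_pair (hn : 2 ≤ n) {P Q : Matrix (Fin m) (Fin n) F}
    (hP : P ≠ 0) (hQ : Q ≠ 0) (hPQ : 2 ≤ (P - Q).rank) :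
    ∃ x z : Fin n → F, LinearIndependent F ![x, z] ∧
      LinearIndependent F ![P.mulVec x, Q.mulVec z] := by
  by_contra hc
  push_neg at hc
  have hbad : ∀ x z : Fin n → F, LinearIndependent F ![x, z] →
      ¬ LinearIndependent F ![P.mulVec x, Q.mulVec z] := hc
  obtain ⟨x₀, hx₀⟩ := mulVec_ne_zero_of_ne_zero hP
  obtain ⟨z₁, hz₁⟩ := mulVec_ne_zero_of_ne_zero hQ
  set u := P.mulVec x₀ with hu
  have hQspan : ∀ z, Q.mulVec z ∈ F ∙ u := fun z => substep_A hn hbad hx₀ z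
  have hbad' : ∀ z x : Fin n → F, LinearIndependent F ![z, x] →
      ¬ LinearIndependent F ![Q.mulVec z, P.mulVec x] := by
    intro z x h hq
    exact hbad x z (li_pair_comm h) (li_pair_comm hq)
  have hPspan' : ∀ x, P.mulVec x ∈ F ∙ (Q.mulVec z₁) := fun x => substep_A hn hbad' hz₁ x
  have hle : (F ∙ (Q.mulVec z₁)) ≤ F ∙ u :=
    (Submodule.span_singleton_le_iff_mem _ _).mpr (hQspan z₁)
  have hPspan : ∀ x, P.mulVec x ∈ F ∙ u := fun x => hle (hPspan' x)
  have hrange : LinearMap.range (P - Q).mulVecLin ≤ F ∙ u := by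
    rintro _ ⟨x, rfl⟩
    rw [Matrix.mulVecLin_apply, Matrix.sub_mulVec]
    exact Submodule.sub_mem _ (hPspan x) (hQspan x)
  have : (P - Q).rank ≤ 1 := by
    have h1 := Submodule.finrank_mono (t := F ∙ u) hrange
    rw [finrank_span_singleton hx₀] at h1
    exact h1
  omega

theorem conv_main (hmn : n ≤ m) (hn : 2 ≤ n) {A B R : Matrix (Fin m) (Fin n) F}
    (h2 : 2 ≤ (A - B).rank) (hRA : R ≠ A) (hRB : R ≠ B) :
    ∃ X : Matrix (Fin m) (Fin n) F,
      (X - R).rank = n ∧ (X - A).rank ≠ n ∧ (X - B).rank ≠ n := by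
  set P := A - R with hPdef
  set Q := B - R with hQdef
  have hP : P ≠ 0 := sub_ne_zero.mpr (fun h => hRA h.symm)
  have hQ : Q ≠ 0 := sub_ne_zero.mpr (fun h => hRB h.symm)
  have hPQ : P - Q = A - B := by rw [hPdef, hQdef]; abel
  obtain ⟨x, z, hxz, huw⟩ := exists_good_pair hn hP hQ (by rw [hPQ]; exact h2)
  obtain ⟨Y, hYx, hYz, hYinj⟩ := exists_inj_matrix hmn hn hxz huw
  have hx0 : x ≠ 0 := hxz.ne_zero 0
  have hz0 : z ≠ 0 := hxz.ne_zero 1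
  refine ⟨Y + R, ?_, ?_, ?_⟩
  · have : Y + R - R = Y := by abel
    rw [this, rank_eq_iff_inj]
    exact hYinj
  · have hE : Y + R - A = Y - P := by rw [hPdef]; abel
    rw [hE]
    intro hr
    have hinj := (rank_eq_iff_inj _).mp hr
    have : (Y - P).mulVec x = 0 := by
      rw [Matrix.sub_mulVec, hYx, sub_self]
    have hx := hinj (a₁ := x) (a₂ := 0) (by
      rw [Matrix.mulVecLin_apply, Matrix.mulVecLin_apply, this, Matrix.mulVec_zero])
    exact hx0 hx
  · have hE : Y + R - B = Y - Q := by rw [hQdef]; abel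
    rw [hE]
    intro hr
    have hinj := (rank_eq_iff_inj _).mp hr
    have : (Y - Q).mulVec z = 0 := by
      rw [Matrix.sub_mulVec, hYz, sub_self]
    have hz := hinj (a₁ := z) (a₂ := 0) (by
      rw [Matrix.mulVecLin_apply, Matrix.mulVecLin_apply, this, Matrix.mulVec_zero])
    exact hz0 hz

end Aux

theorem stmt_3 (F : Type*) [Field F] [DecidableEq F]
    (h3 : ∃ a b c : F, a ≠ b ∧ a ≠ c ∧ b ≠ c)
    (m n : ℕ) (hmn : n ≤ m) (hn : 2 ≤ n)
    (A B : Matrix (Fin m) (Fin n) F) (hAB : A ≠ B) :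
    (A - B).rank = 1 ↔
      ∃ R : Matrix (Fin m) (Fin n) F, R ≠ A ∧ R ≠ B ∧
        ∀ X : Matrix (Fin m) (Fin n) F,
          (X - R).rank = n → (X - A).rank = n ∨ (X - B).rank = n := by
  have hD0 : A - B ≠ 0 := sub_ne_zero.mpr hAB
  constructor
  · intro hD
    -- pick t ≠ 0 with t + 1 ≠ 0
    have ht : ∃ t : F, t ≠ 0 ∧ t + 1 ≠ 0 := by
      by_contra hc
      push_neg at hc
      have h' : ∀ t : F, t = 0 ∨ t = -1 := by
        intro t
        by_cases h0 : t = 0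
        · exact Or.inl h0
        · right; have := hc t h0; linear_combination this
      obtain ⟨a, b, c, hab, hac, hbc⟩ := h3
      rcases h' a with ha | ha <;> rcases h' b with hb | hb <;> rcases h' c with hc' | hc'
      · exact hab (ha.trans hb.symm)
      · exact hab (ha.trans hb.symm) <;> skip
      all_goals first
        | exact hab (ha.trans hb.symm)
        | exact hac (ha.trans hc'.symm)
        | exact hbc (hb.trans hc'.symm)
    obtain ⟨t, ht0, ht1⟩ := ht
    refine ⟨A + t • (A - B), ?_, ?_, ?_⟩
    · intro h
      have : t • (A - B) = 0 := by
        have := sub_eq_zero.mpr h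
        rw [add_sub_cancel_left] at this
        exact this
      rcases smul_eq_zero.mp this with h' | h'
      · exact ht0 h'
      · exact hD0 h'
    · intro h
      have h' : (t + 1) • (A - B) = 0 := by
        have h1 : A + t • (A - B) - B = (t + 1) • (A - B) := by
          rw [add_smul, one_smul]; abel
        rw [← h1, h, sub_self]
      rcases smul_eq_zero.mp h' with h'' | h''
      · exact ht1 h''
      · exact hD0 h''
    · intro X hX
      have hMinj := (rank_eq_iff_inj _).mp hX
      have hXA : X - A = (X - (A + t • (A - B))) + t • (A - B) := by abel
      have hXB : X - B = (X - (A + t • (A - B))) + (t + 1) • (A - B) := by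
        rw [add_smul, one_smul]; abel
      rcases key_fwd (A - B) (X - (A + t • (A - B))) hD hMinj t with h | h
      · left; rw [hXA, rank_eq_iff_inj]; exact h
      · right; rw [hXB, rank_eq_iff_inj]; exact h
  · rintro ⟨R, hRA, hRB, hR⟩
    by_contra hr1
    have hr0 : (A - B).rank ≠ 0 := by
      intro h
      apply hD0
      have hrange : LinearMap.range (A - B).mulVecLin = ⊥ := by
        have : finrank F (LinearMap.range (A - B).mulVecLin) = 0 := h
        exact Submodule.finrank_eq_zero.mp this
      have : (A - B).mulVecLin = 0 := LinearMap.range_eq_bot.mp hrange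
      apply Matrix.toLin'.injective
      rw [map_zero, Matrix.toLin'_apply', this]
    have h2 : 2 ≤ (A - B).rank := by omega
    obtain ⟨X, hX, hXA, hXB⟩ := conv_main hmn hn h2 hRA hRB
    rcases hR X hX with h | h
    · exact hXA h
    · exact hXB h
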